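/- Let σ₀ be the 2×2 identity matrix and σ₁ the bit-flip (Pauli-X) matrix over ℂ. Let |ψ_in⟩ be a unit vector of (ℂ²)^{⊗10}, ρ_in = |ψ_in⟩⟨ψ_in|, and fix κ₁,…,κ₁₀ ∈ {0,1}. For ι₁,ι₂ ∈ {0,1} write ι = 2ι₁+ι₂ ∈ {0,1,2,3}, let M_ι = |ι₁ι₂⟩⟨ι₁ι₂| ⊗ 1^{⊗8}, and let A_ι be the operator on (ℂ²)^{⊗10} that applies σ_{κ_{2ι+3}} to qubit 2ι+3 and σ_{κ_{2ι+4}} to qubit 2ι+4 and the identity to all other qubits. Let real numbers O_{x₁,x₂} (x₁,x₂ ∈ {0,1}) be given, and define X₁ = Σ_{x₁,x₂} O_{x₁,x₂} |x₁x₂⟩⟨x₁x₂| ⊗ 1^{⊗8} and, for each ι, X_{2.ι} = the operator that projects qubits 1,2 onto |ι₁ι₂⟩, projects qubits 2ι+3, 2ι+4 onto |x,y⟩ with weight O_{x,y} summed over x,y ∈ {0,1}, and acts as the identity on the remaining six qubits. Set ρ = (σ_{κ₁}⊗σ_{κ₂}⊗1^{⊗8}) ρ_in (σ_{κ₁}⊗σ_{κ₂}⊗1^{⊗8}),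 ρ′_fin = Σ_{ι=0}^{3} A_ι M_ι ρ M_ι A_ι, and ρ_fin = (⊗_{j=1}^{10} σ_{κ_j}) ρ_in (⊗_{j=1}^{10} σ_{κ_j}). Then tr(X₁ ρ′_fin) = tr(X₁ ρ_fin) and tr((Σ_{ι=0}^{3} X_{2.ι}) ρ′_fin) = tr((Σ_{ι=0}^{3} X_{2.ι}) ρ_fin); that is, the sequential measure-then-act procedure and the single final state determine the same first-stage and second-stage expected outcomes. -/

import Mathlib

open Matrix

/-- The single-qubit operators: `sig 0` is the identity, `sig 1` the bit-flip. -/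
noncomputable def sig : Fin 2 → Matrix (Fin 2) (Fin 2) ℂ
  | 0 => 1
  | 1 => !![0, 1; 1, 0]

/-- Tensor (Kronecker) product of `n` one-qubit operators, realized as a matrix
indexed by `Fin n → Fin 2`. -/
noncomputable def tensorOp {n : ℕ} (A : Fin n → Matrix (Fin 2) (Fin 2) ℂ) :
    Matrix (Fin n → Fin 2) (Fin n → Fin 2) ℂ :=
  Matrix.of fun v w => ∏ j, A j (v j) (w j)

/-- The computational basis vector `|x⟩` of `(ℂ²)^⊗n`. -/
def basisKet {n : ℕ} (x : Fin n → Fin 2) : (Fin n → Fin 2) → ℂ :=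
  fun v => if v = x then 1 else 0

/-- The rank-one operator `|ψ⟩⟨ψ|`. -/
noncomputable def ketbra {n : ℕ} (ψ : (Fin n → Fin 2) → ℂ) :
    Matrix (Fin n → Fin 2) (Fin n → Fin 2) ℂ :=
  Matrix.vecMulVec ψ (star ψ)

/-- `Σ_{x,y} O x y |x y⟩⟨x y|` on qubits `i, j`, tensored with the identity on
all remaining qubits (a diagonal operator). -/
noncomputable def payoffOp {n : ℕ} (i j : Fin n) (O : Matrix (Fin 2) (Fin 2) ℝ) :
    Matrix (Fin n → Fin 2) (Fin n → Fin 2) ℂ :=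
  Matrix.of fun v w => if v = w then (O (v i) (v j) : ℂ) else 0

/-- First bit `ι₁` of `ι = 2ι₁ + ι₂ ∈ {0,1,2,3}`. -/
def bit1 : Fin 4 → Fin 2 := ![0, 0, 1, 1]

/-- Second bit `ι₂` of `ι = 2ι₁ + ι₂ ∈ {0,1,2,3}`. -/
def bit2 : Fin 4 → Fin 2 := ![0, 1, 0, 1]

/-- The index `ι = 2ι₁ + ι₂ ∈ {0,1,2,3}` built from its two bits. -/
def idx (a b : Fin 2) : Fin 4 := ⟨2 * a.val + b.val, by omega⟩

/-- Zero-based index of qubit `2ι + 3`. -/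
def qa : Fin 4 → Fin 10 := ![2, 4, 6, 8]

/-- Zero-based index of qubit `2ι + 4`. -/
def qb : Fin 4 → Fin 10 := ![3, 5, 7, 9]

/-- The measurement operator `M_ι = |ι₁ι₂⟩⟨ι₁ι₂| ⊗ 1^{⊗8}` on `(ℂ²)^⊗10`. -/
noncomputable def Mop (ι : Fin 4) : Matrix (Fin 10 → Fin 2) (Fin 10 → Fin 2) ℂ :=
  Matrix.of fun v w => if v = w ∧ v 0 = bit1 ι ∧ v 1 = bit2 ι then 1 else 0

/-- The operator `X_{2.ι}` on `(ℂ²)^⊗10`: projects qubits 1,2 onto `|ι₁ι₂⟩`,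
projects qubits `2ι+3, 2ι+4` onto `|x,y⟩` with weight `O x y` summed over
`x, y ∈ {0,1}`, and acts as the identity on the remaining six qubits. -/
noncomputable def X2op (O : Matrix (Fin 2) (Fin 2) ℝ) (ι : Fin 4) :
    Matrix (Fin 10 → Fin 2) (Fin 10 → Fin 2) ℂ :=
  Matrix.of fun v w =>
    if v = w ∧ v 0 = bit1 ι ∧ v 1 = bit2 ι then (O (v (qa ι)) (v (qb ι)) : ℂ) else 0

/-! ### Auxiliary machinery -/

def addv {n : ℕ} (c v : Fin n → Fin 2) : Fin n → Fin 2 := fun j => v j + c j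

lemma addv_invol {n : ℕ} (c : Fin n → Fin 2) : Function.Involutive (addv c) := by
  intro v; funext j
  have h : ∀ a b : Fin 2, a + b + b = a := by decide
  simp [addv, h]

noncomputable def Pmat {n : ℕ} (c : Fin n → Fin 2) :
    Matrix (Fin n → Fin 2) (Fin n → Fin 2) ℂ := tensorOp fun j => sig (c j)

lemma sig_apply (k a b : Fin 2) : sig k a b = if b = a + k then 1 else 0 := by
  fin_cases k <;> fin_cases a <;> fin_cases b <;> simp [sig, Matrix.one_apply]

lemma Pmat_apply {n : ℕ} (c : Fin n → Fin 2) (v w : Fin n → Fin 2) :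
    Pmat c v w = if w = addv c v then 1 else 0 := by
  simp only [Pmat, tensorOp, Matrix.of_apply, sig_apply]
  rw [Finset.prod_boole]
  congr 1
  simp [funext_iff, addv]

lemma Pmat_mul {n : ℕ} (c : Fin n → Fin 2) (M : Matrix (Fin n → Fin 2) (Fin n → Fin 2) ℂ)
    (v w : Fin n → Fin 2) : (Pmat c * M) v w = M (addv c v) w := by
  rw [Matrix.mul_apply]
  simp [Pmat_apply]

lemma mul_Pmat {n : ℕ} (c : Fin n → Fin 2) (M : Matrix (Fin n → Fin 2) (Fin n → Fin 2) ℂ)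
    (v w : Fin n → Fin 2) : (M * Pmat c) v w = M v (addv c w) := by
  rw [Matrix.mul_apply]
  have h : ∀ u, (w = addv c u) ↔ (u = addv c w) := fun u => by
    constructor
    · rintro rfl; exact (addv_invol c u).symm
    · rintro rfl; exact (addv_invol c w).symm
  simp [Pmat_apply, h]

lemma Mop_mul (ι : Fin 4) (M : Matrix (Fin 10 → Fin 2) (Fin 10 → Fin 2) ℂ)
    (v w : Fin 10 → Fin 2) :
    (Mop ι * M) v w = if v 0 = bit1 ι ∧ v 1 = bit2 ι then M v w else 0 := by
  rw [Matrix.mul_apply]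
  by_cases h : v 0 = bit1 ι ∧ v 1 = bit2 ι <;> simp [Mop, h]

lemma mul_Mop (ι : Fin 4) (M : Matrix (Fin 10 → Fin 2) (Fin 10 → Fin 2) ℂ)
    (v w : Fin 10 → Fin 2) :
    (M * Mop ι) v w = if w 0 = bit1 ι ∧ w 1 = bit2 ι then M v w else 0 := by
  rw [Matrix.mul_apply]
  have key : ∀ x, M v x * Mop ι x w
      = if x = w then (if w 0 = bit1 ι ∧ w 1 = bit2 ι then M v x else 0) else 0 := by
    intro x
    by_cases hx : x = w
    · subst hx
      by_cases h : x 0 = bit1 ι ∧ x 1 = bit2 ι <;> simp [Mop, h]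
    · simp [Mop, hx]
  simp [key]

lemma trace_mul_diag {α : Type*} [Fintype α] [DecidableEq α] (X M : Matrix α α ℂ)
    (h : ∀ v w, v ≠ w → X v w = 0) :
    (X * M).trace = ∑ v, X v v * M v v := by
  simp only [Matrix.trace, Matrix.diag, Matrix.mul_apply]
  refine Finset.sum_congr rfl fun v _ => ?_
  rw [Finset.sum_eq_single v]
  · intro b _ hb; rw [h v b (Ne.symm hb), zero_mul]
  · intro hv; exact absurd (Finset.mem_univ v) hv

lemma cond_iff : ∀ (a b : Fin 2) (ι : Fin 4), (a = bit1 ι ∧ b = bit2 ι) ↔ ι = idx a b := by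
  decide

lemma sum_cond (v : Fin 10 → Fin 2) (F : Fin 4 → ℂ) :
    ∑ ι : Fin 4, (if v 0 = bit1 ι ∧ v 1 = bit2 ι then F ι else 0)
      = F (idx (v 0) (v 1)) := by
  simp only [cond_iff]
  simp

def cvec (κ : Fin 10 → Fin 2) : Fin 10 → Fin 2 :=
  fun j => if j = 0 ∨ j = 1 then κ j else 0

def dvec (κ : Fin 10 → Fin 2) (ι : Fin 4) : Fin 10 → Fin 2 :=
  fun j => if j = qa ι ∨ j = qb ι then κ j else 0

def evec (κ : Fin 10 → Fin 2) (ι : Fin 4) : Fin 10 → Fin 2 :=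
  fun j => if j = 0 ∨ j = 1 ∨ j = qa ι ∨ j = qb ι then 0 else κ j

lemma evec0 (κ : Fin 10 → Fin 2) (ι : Fin 4) : evec κ ι 0 = 0 := by simp [evec]
lemma evec1 (κ : Fin 10 → Fin 2) (ι : Fin 4) : evec κ ι 1 = 0 := by simp [evec]
lemma evec_qa (κ : Fin 10 → Fin 2) (ι : Fin 4) : evec κ ι (qa ι) = 0 := by simp [evec]
lemma evec_qb (κ : Fin 10 → Fin 2) (ι : Fin 4) : evec κ ι (qb ι) = 0 := by simp [evec]

lemma dvec0 (κ : Fin 10 → Fin 2) (ι : Fin 4) : dvec κ ι 0 = 0 := by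
  fin_cases ι <;> simp [dvec, qa, qb]
lemma dvec1 (κ : Fin 10 → Fin 2) (ι : Fin 4) : dvec κ ι 1 = 0 := by
  fin_cases ι <;> simp [dvec, qa, qb]

lemma sum_decomp (κ : Fin 10 → Fin 2) (ι : Fin 4) (j : Fin 10) :
    cvec κ j + dvec κ ι j + evec κ ι j = κ j := by
  fin_cases ι <;> fin_cases j <;> simp [cvec, dvec, evec, qa, qb]

lemma addv_key (κ : Fin 10 → Fin 2) (ι : Fin 4) (v : Fin 10 → Fin 2) :
    addv κ (addv (evec κ ι) v) = addv (cvec κ) (addv (dvec κ ι) v) := by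
  funext j
  simp only [addv]
  rw [← sum_decomp κ ι j]
  have : ∀ (a c d e : Fin 2), a + e + (c + d + e) = a + d + c := by decide
  exact this _ _ _ _

lemma addv_apply {n : ℕ} (c v : Fin n → Fin 2) (j : Fin n) : addv c v j = v j + c j := rfl

lemma key (ψ : (Fin 10 → Fin 2) → ℂ) (κ : Fin 10 → Fin 2)
    (W : Fin 4 → (Fin 10 → Fin 2) → ℂ)
    (hW : ∀ ι v, W ι (addv (evec κ ι) v) = W ι v) :
    ∑ v, ∑ ι : Fin 4, (if v 0 = bit1 ι ∧ v 1 = bit2 ι then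
        W ι v * (ψ (addv (cvec κ) (addv (dvec κ ι) v))
          * star (ψ (addv (cvec κ) (addv (dvec κ ι) v)))) else 0)
  = ∑ v, ∑ ι : Fin 4, (if v 0 = bit1 ι ∧ v 1 = bit2 ι then
        W ι v * (ψ (addv κ v) * star (ψ (addv κ v))) else 0) := by
  conv_lhs => rw [Finset.sum_comm]
  conv_rhs => rw [Finset.sum_comm]
  refine Finset.sum_congr rfl fun ι _ => ?_
  refine Fintype.sum_equiv ((addv_invol (evec κ ι)).toPerm _) _ _ fun v => ?_
  simp only [Function.Involutive.coe_toPerm]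
  have h0 : addv (evec κ ι) v 0 = v 0 := by rw [addv_apply, evec0, add_zero]
  have h1 : addv (evec κ ι) v 1 = v 1 := by rw [addv_apply, evec1, add_zero]
  simp only [h0, h1]; rw [hW, addv_key]

/-- the sequential measure-then-act procedure and the single final
state `ρ_fin = (⊗ⱼ σ_{κⱼ}) ρ_in (⊗ⱼ σ_{κⱼ})` determine the same first-stage and
second-stage expected outcomes. -/
theorem stmt_6 (O : Matrix (Fin 2) (Fin 2) ℝ) (ψ : (Fin 10 → Fin 2) → ℂ)
    (hunit : ∑ v, Complex.normSq (ψ v) = 1) (κ : Fin 10 → Fin 2) :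
    let ρin := ketbra ψ
    let Aop : Fin 4 → Matrix (Fin 10 → Fin 2) (Fin 10 → Fin 2) ℂ := fun ι =>
      tensorOp fun j => if j = qa ι ∨ j = qb ι then sig (κ j) else 1
    let U12 := tensorOp fun j : Fin 10 => if j = 0 ∨ j = 1 then sig (κ j) else 1
    let ρ := U12 * ρin * U12
    let ρ'fin := ∑ ι : Fin 4, Aop ι * Mop ι * ρ * Mop ι * Aop ι
    let Ufull := tensorOp fun j => sig (κ j)
    let ρfin := Ufull * ρin * Ufull
    (payoffOp 0 1 O * ρ'fin).trace = (payoffOp 0 1 O * ρfin).trace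
      ∧ ((∑ ι : Fin 4, X2op O ι) * ρ'fin).trace
        = ((∑ ι : Fin 4, X2op O ι) * ρfin).trace := by
  intro ρin Aop U12 ρ ρ'fin Ufull ρfin
  have hdiag1 : ∀ v w : Fin 10 → Fin 2, v ≠ w → payoffOp 0 1 O v w = 0 := by
    intro v w hvw; simp [payoffOp, hvw]
  have hdiag2 : ∀ v w : Fin 10 → Fin 2, v ≠ w → (∑ ι : Fin 4, X2op O ι) v w = 0 := by
    intro v w hvw; simp [X2op, Matrix.sum_apply, hvw]
  have hsig0 : sig 0 = 1 := rfl
  have hU12 : U12 = Pmat (cvec κ) := by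
    have hfun : (fun j : Fin 10 => if j = 0 ∨ j = 1 then sig (κ j) else 1)
        = fun j => sig (cvec κ j) := by
      funext j
      by_cases h : j = 0 ∨ j = 1 <;> simp [cvec, h, hsig0]
    show tensorOp _ = tensorOp _
    rw [hfun]
  have hA : ∀ ι, Aop ι = Pmat (dvec κ ι) := by
    intro ι
    have hfun : (fun j : Fin 10 => if j = qa ι ∨ j = qb ι then sig (κ j) else 1)
        = fun j => sig (dvec κ ι j) := by
      funext j
      by_cases h : j = qa ι ∨ j = qb ι <;> simp [dvec, h, hsig0]
    show tensorOp _ = tensorOp _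
    rw [hfun]
  have hρfin : ∀ v, ρfin v v = ψ (addv κ v) * star (ψ (addv κ v)) := by
    intro v
    show (Pmat κ * ketbra ψ * Pmat κ) v v = _
    rw [mul_Pmat, Pmat_mul]
    simp [ketbra, Matrix.vecMulVec_apply]
  have hρ' : ∀ v, ρ'fin v v = ∑ ι : Fin 4,
      (if v 0 = bit1 ι ∧ v 1 = bit2 ι then
        ψ (addv (cvec κ) (addv (dvec κ ι) v))
          * star (ψ (addv (cvec κ) (addv (dvec κ ι) v))) else 0) := by
    intro v
    show (∑ ι : Fin 4, Aop ι * Mop ι * (U12 * ρin * U12) * Mop ι * Aop ι) v v = _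
    rw [Matrix.sum_apply]
    refine Finset.sum_congr rfl fun ι _ => ?_
    rw [hU12, hA ι]
    show (Pmat (dvec κ ι) * Mop ι * (Pmat (cvec κ) * ketbra ψ * Pmat (cvec κ))
      * Mop ι * Pmat (dvec κ ι)) v v = _
    have hd0 : addv (dvec κ ι) v 0 = v 0 := by rw [addv_apply, dvec0, add_zero]
    have hd1 : addv (dvec κ ι) v 1 = v 1 := by rw [addv_apply, dvec1, add_zero]
    rw [mul_Pmat, mul_Mop,
      Matrix.mul_assoc (Pmat (dvec κ ι)) (Mop ι)
        (Pmat (cvec κ) * ketbra ψ * Pmat (cvec κ)),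
      Pmat_mul, Mop_mul, mul_Pmat, Pmat_mul, hd0, hd1]
    by_cases hc : v 0 = bit1 ι ∧ v 1 = bit2 ι <;>
      simp [hc, ketbra, Matrix.vecMulVec_apply, addv_invol]
  have hpay : ∀ v : Fin 10 → Fin 2, payoffOp 0 1 O v v = ((O (v 0) (v 1) : ℝ) : ℂ) := by
    intro v; simp [payoffOp]
  have hX2 : ∀ v : Fin 10 → Fin 2, (∑ ι : Fin 4, X2op O ι) v v
      = ∑ ι : Fin 4, (if v 0 = bit1 ι ∧ v 1 = bit2 ι
          then ((O (v (qa ι)) (v (qb ι)) : ℝ) : ℂ) else 0) := by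
    intro v; simp [Matrix.sum_apply, X2op]
  constructor
  · rw [trace_mul_diag _ _ hdiag1, trace_mul_diag _ _ hdiag1]
    have step := key ψ κ (fun _ v => ((O (v 0) (v 1) : ℝ) : ℂ)) (by
      intro ι v
      have h0 : addv (evec κ ι) v 0 = v 0 := by rw [addv_apply, evec0, add_zero]
      have h1 : addv (evec κ ι) v 1 = v 1 := by rw [addv_apply, evec1, add_zero]
      simp only [h0, h1])
    calc ∑ v, payoffOp 0 1 O v v * ρ'fin v v
        = ∑ v, ∑ ι : Fin 4, (if v 0 = bit1 ι ∧ v 1 = bit2 ι then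
            ((O (v 0) (v 1) : ℝ) : ℂ) * (ψ (addv (cvec κ) (addv (dvec κ ι) v))
              * star (ψ (addv (cvec κ) (addv (dvec κ ι) v)))) else 0) := by
          refine Finset.sum_congr rfl fun v _ => ?_
          rw [hpay, hρ', Finset.mul_sum]
          exact Finset.sum_congr rfl fun ι _ => by rw [mul_ite, mul_zero]
      _ = ∑ v, ∑ ι : Fin 4, (if v 0 = bit1 ι ∧ v 1 = bit2 ι then
            ((O (v 0) (v 1) : ℝ) : ℂ)
              * (ψ (addv κ v) * star (ψ (addv κ v))) else 0) := step
      _ = ∑ v, payoffOp 0 1 O v v * ρfin v v := by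
          refine Finset.sum_congr rfl fun v _ => ?_
          rw [hpay, hρfin, sum_cond]
  · rw [trace_mul_diag _ _ hdiag2, trace_mul_diag _ _ hdiag2]
    have step := key ψ κ (fun ι v => ((O (v (qa ι)) (v (qb ι)) : ℝ) : ℂ)) (by
      intro ι v
      have ha : addv (evec κ ι) v (qa ι) = v (qa ι) := by rw [addv_apply, evec_qa, add_zero]
      have hb : addv (evec κ ι) v (qb ι) = v (qb ι) := by rw [addv_apply, evec_qb, add_zero]
      simp only [ha, hb])
    have prodlemma : ∀ (v : Fin 10 → Fin 2) (G : Fin 4 → ℂ),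
        (∑ ι : Fin 4, (if v 0 = bit1 ι ∧ v 1 = bit2 ι then
            ((O (v (qa ι)) (v (qb ι)) : ℝ) : ℂ) else 0))
          * (∑ ι : Fin 4, (if v 0 = bit1 ι ∧ v 1 = bit2 ι then G ι else 0))
        = ∑ ι : Fin 4, (if v 0 = bit1 ι ∧ v 1 = bit2 ι then
            ((O (v (qa ι)) (v (qb ι)) : ℝ) : ℂ) * G ι else 0) := by
      intro v G
      rw [sum_cond, sum_cond, sum_cond]
    calc ∑ v, (∑ ι : Fin 4, X2op O ι) v v * ρ'fin v v
        = ∑ v, ∑ ι : Fin 4, (if v 0 = bit1 ι ∧ v 1 = bit2 ι then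
            ((O (v (qa ι)) (v (qb ι)) : ℝ) : ℂ)
              * (ψ (addv (cvec κ) (addv (dvec κ ι) v))
                * star (ψ (addv (cvec κ) (addv (dvec κ ι) v)))) else 0) := by
          refine Finset.sum_congr rfl fun v _ => ?_
          rw [hX2, hρ', prodlemma]
      _ = ∑ v, ∑ ι : Fin 4, (if v 0 = bit1 ι ∧ v 1 = bit2 ι then
            ((O (v (qa ι)) (v (qb ι)) : ℝ) : ℂ)
              * (ψ (addv κ v) * star (ψ (addv κ v))) else 0) := step
      _ = ∑ v, (∑ ι : Fin 4, X2op O ι) v v * ρfin v v := by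
          refine Finset.sum_congr rfl fun v _ => ?_
          rw [hX2, hρfin, ← prodlemma v (fun _ => ψ (addv κ v) * star (ψ (addv κ v))),
            sum_cond, sum_cond]
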